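/- Every symmetric biderivation of W(0,2) is identically zero: if f ∈ Bid₊(W(0,2)), then f(x,y) = 0 for all x,y ∈ W(0,2). -/

import Mathlib

/-- `f` is a biderivation: a derivation in each argument. -/
def IsBiderivation {W : Type*} [LieRing W] (f : W → W → W) : Prop :=
  (∀ x y z : W, f ⁅x, y⁆ z = ⁅x, f y z⁆ + ⁅f x z, y⁆) ∧
  (∀ x y z : W, f x ⁅y, z⁆ = ⁅f x y, z⁆ + ⁅y, f x z⁆)

/-- A model of the Lie algebra `W(a,b)`: a complex Lie algebra with a basis
`{L m, I m | m : ℤ}` satisfying the defining bracket relations. -/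
structure IsWab (a b : ℂ) (W : Type*) [LieRing W] [LieAlgebra ℂ W]
    (L I : ℤ → W) : Prop where
  bracket_LL : ∀ m n : ℤ, ⁅L m, L n⁆ = ((m - n : ℤ) : ℂ) • L (m + n)
  bracket_LI : ∀ m n : ℤ, ⁅L m, I n⁆ = (-((n : ℂ) + a + b * (m : ℂ))) • I (m + n)
  bracket_II : ∀ m n : ℤ, ⁅I m, I n⁆ = 0
  basis : ∃ B : Module.Basis (ℤ ⊕ ℤ) ℂ W,
    (∀ m : ℤ, B (Sum.inl m) = L m) ∧ (∀ m : ℤ, B (Sum.inr m) = I m)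

private lemma K1 (F : ℤ → ℤ → ℂ)
    (h : ∀ m n s : ℤ, ((n + 2*m : ℤ) : ℂ) * F (m+n) s = ((s - 2*m : ℤ) : ℂ) * F n (s-m)) :
    ∀ n s : ℤ, F n s = 0 := by
  have hoff : ∀ n s : ℤ, s ≠ n → F n s = 0 := by
    intro n s hne
    have e := h 0 n s
    simp only [mul_zero, add_zero, zero_add, sub_zero] at e
    have hc : ((s : ℂ) - n) ≠ 0 := sub_ne_zero.mpr (by exact_mod_cast hne)
    have h2 : ((s : ℂ) - n) * F n s = 0 := by push_cast at e ⊢; linear_combination -e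
    exact (mul_eq_zero.mp h2).resolve_left hc
  have hd : ∀ m n : ℤ, ((n + 2*m : ℤ) : ℂ) * F (m+n) (m+n) = ((n - m : ℤ) : ℂ) * F n n := by
    intro m n
    have e := h m n (m+n)
    rw [show m + n - m = n from by ring] at e
    rw [show m + n - 2*m = n - m from by ring] at e
    exact e
  have h22 : F 2 2 = 0 := by
    have e := hd 1 1
    norm_num at e
    exact e
  have h00 : F 0 0 = 0 := by
    have e := hd 2 0
    rw [show (2:ℤ) + 0 = 2 from by ring, h22] at e
    norm_num at e
    exact e
  intro n s
  by_cases hs : s = n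
  · subst hs
    by_cases hn : s = 0
    · subst hn; exact h00
    · have e := hd s 0
      rw [show s + 0 = s from by ring, h00, mul_zero] at e
      have hc : ((0 + 2*s : ℤ) : ℂ) ≠ 0 := Int.cast_ne_zero.mpr (by omega)
      exact (mul_eq_zero.mp e).resolve_left hc
  · exact hoff n s hs

private lemma K2 (G : ℤ → ℤ → ℂ)
    (h : ∀ m n s : ℤ, ((n + 2*m : ℤ) : ℂ) * G (m+n) s = ((s + m : ℤ) : ℂ) * G n (s-m)) :
    (∀ n s : ℤ, s ≠ n → G n s = 0) ∧ (∀ n : ℤ, G n n = G 0 0) := by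
  constructor
  · intro n s hne
    have e := h 0 n s
    simp only [mul_zero, add_zero, zero_add, sub_zero] at e
    have hc : ((s : ℂ) - n) ≠ 0 := sub_ne_zero.mpr (by exact_mod_cast hne)
    have h2 : ((s : ℂ) - n) * G n s = 0 := by push_cast at e ⊢; linear_combination -e
    exact (mul_eq_zero.mp h2).resolve_left hc
  · intro n
    by_cases hn : n = 0
    · subst hn; rfl
    · have e := h n 0 n
      rw [show n + 0 = n from by ring, show n - n = (0:ℤ) from by ring] at e
      -- e : ((0 + 2*n:ℤ):ℂ) * G n n = ((n+n:ℤ):ℂ) * G 0 0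
      have hc : ((2:ℂ) * n) ≠ 0 := by
        simp only [mul_ne_zero_iff]
        exact ⟨two_ne_zero, Int.cast_ne_zero.mpr hn⟩
      have h2 : (2:ℂ) * n * G n n = (2:ℂ) * n * G 0 0 := by push_cast at e ⊢; linear_combination e
      exact mul_left_cancel₀ hc h2


private lemma KA (A : ℤ → ℤ → ℤ → ℂ)
    (S : ∀ n p k : ℤ, A n p k = A p n k)
    (H : ∀ m n p s : ℤ, ((m - n : ℤ) : ℂ) * A (m+n) p s
       = ((2*m - s : ℤ) : ℂ) * A n p (s-m) + ((s - 2*n : ℤ) : ℂ) * A m p (s-n)) :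
    ∀ n p s : ℤ, A n p s = 0 := by
  have h0 : ∀ n p s : ℤ, ((s - n : ℤ) : ℂ) * A n p s = ((s - 2*n : ℤ) : ℂ) * A 0 p (s-n) := by
    intro n p s
    have e := H 0 n p s
    simp only [zero_add, sub_zero, mul_zero, zero_sub, zero_mul] at e
    push_cast at e ⊢
    linear_combination e
  have hu : ∀ t : ℤ, A 0 0 t = 0 := by
    intro t
    have e1 := h0 1 2 (t+3)
    have e2 := h0 2 1 (t+3)
    have e3 := h0 2 0 (t+2)
    have e4 := h0 1 0 (t+1)
    rw [show t+3-1 = t+2 from by ring, show t+3-2*1 = t+1 from by ring, S 0 2 (t+2)] at e1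
    rw [show t+3-2 = t+1 from by ring, show t+3-2*2 = t-1 from by ring, S 0 1 (t+1),
        S 2 1 (t+3)] at e2
    rw [show t+2-2 = t from by ring, show t+2-2*2 = t-2 from by ring] at e3
    rw [show t+1-1 = t from by ring, show t+1-2*1 = t-1 from by ring] at e4
    push_cast at e1 e2 e3 e4
    -- e1 : (t+2) * A 1 2 (t+3) = (t+1) * A 2 0 (t+2)
    -- e2 : (t+1) * A 1 2 (t+3) = (t-1) * A 1 0 (t+1)
    -- e3 : t * A 2 0 (t+2) = (t-2) * A 0 0 t
    -- e4 : t * A 1 0 (t+1) = (t-1) * A 0 0 t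
    linear_combination (((t:ℂ)+1) * (t:ℂ) * e1 - (t:ℂ)*((t:ℂ)+2) * e2
      + ((t:ℂ)+1)^2 * e3 - ((t:ℂ)+2)*((t:ℂ)-1) * e4) * ((1:ℂ)/4)
  have hv1 : ∀ n s : ℤ, s ≠ n → A n 0 s = 0 := by
    intro n s hne
    have e := h0 n 0 s
    rw [hu (s-n), mul_zero] at e
    have hc : ((s - n : ℤ) : ℂ) ≠ 0 := Int.cast_ne_zero.mpr (by omega)
    exact (mul_eq_zero.mp e).resolve_left hc
  have hstar : ∀ n p : ℤ, ((p : ℤ) : ℂ) * A n p (n+p) = ((p - n : ℤ) : ℂ) * A p 0 p := by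
    intro n p
    have e := h0 n p (n+p)
    rw [show n+p-n = p from by ring, S 0 p p] at e
    push_cast at e ⊢
    linear_combination e
  have hg : ∀ n p : ℤ, (n:ℂ)*((p:ℂ)-n) * A p 0 p = (p:ℂ)*((n:ℂ)-p) * A n 0 n := by
    intro n p
    have e1 := hstar n p
    have e2 := hstar p n
    rw [show p+n = n+p from by ring, S p n (n+p)] at e2
    push_cast at e1 e2 ⊢
    linear_combination (p:ℂ) * e2 - (n:ℂ) * e1
  have hv101 : A 1 0 1 = 0 := by
    have g12 := hg 1 2
    have g13 := hg 1 3
    have g23 := hg 2 3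
    push_cast at g12 g13 g23
    linear_combination ((1:ℂ)/4)*g12 + ((1:ℂ)/12)*g13 - ((1:ℂ)/12)*g23
  have hv202 : A 2 0 2 = 0 := by
    have g21 := hg 2 1
    push_cast at g21
    linear_combination -g21 - 2*hv101
  have hv : ∀ n : ℤ, A n 0 n = 0 := by
    intro n
    have g1 := hg n 1
    have g2 := hg n 2
    rw [hv101] at g1
    rw [hv202] at g2
    push_cast at g1 g2
    linear_combination -g1 + g2/2
  have hAn0 : ∀ n s : ℤ, A n 0 s = 0 := by
    intro n s
    by_cases hs : s = n
    · subst hs; exact hv s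
    · exact hv1 n s hs
  have hA0 : ∀ p s : ℤ, A 0 p s = 0 := fun p s => (S 0 p s).trans (hAn0 p s)
  have hoff : ∀ n p s : ℤ, s ≠ n → A n p s = 0 := by
    intro n p s hne
    have e := h0 n p s
    rw [hA0 p (s-n), mul_zero] at e
    have hc : ((s - n : ℤ) : ℂ) ≠ 0 := Int.cast_ne_zero.mpr (by omega)
    exact (mul_eq_zero.mp e).resolve_left hc
  have hdiag : ∀ n : ℤ, A n n n = 0 := by
    intro n
    set m : ℤ := (n.natAbs : ℤ) + 1 with hmdef
    have hm0 : m ≠ 0 := by omega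
    have hmn : m ≠ n := by omega
    have e := H m n n (m+n)
    rw [show m+n-m = n from by ring, show m+n-n = m from by ring] at e
    rw [S (m+n) n (m+n), hoff n (m+n) (m+n) (by omega)] at e
    rw [S m n m, hoff n m m (by omega)] at e
    -- e : (m-n) * 0 = (2m-(m+n)) * A n n n + (m+n-2n) * 0
    have e2 : ((m - n : ℤ) : ℂ) * A n n n = 0 := by
      push_cast at e ⊢
      linear_combination -e
    have hc : ((m - n : ℤ) : ℂ) ≠ 0 := Int.cast_ne_zero.mpr (by omega)
    exact (mul_eq_zero.mp e2).resolve_left hc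
  intro n p s
  by_cases h1 : s = n
  · by_cases h2 : p = n
    · rw [h1, h2]; exact hdiag n
    · rw [h1, S]; exact hoff p n n (fun hh => h2 hh.symm)
  · exact hoff n p s h1


private lemma KB (A : ℤ → ℤ → ℤ → ℂ)
    (S : ∀ n p k : ℤ, A n p k = A p n k)
    (H : ∀ m n p s : ℤ, ((m - n : ℤ) : ℂ) * A (m+n) p s
       = -(((s + m : ℤ) : ℂ)) * A n p (s-m) + ((s + n : ℤ) : ℂ) * A m p (s-n)) :
    ∀ n p s : ℤ, A n p s = 0 := by
  have h0 : ∀ n p s : ℤ, ((s - n : ℤ) : ℂ) * A n p s = ((s + n : ℤ) : ℂ) * A 0 p (s-n) := by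
    intro n p s
    have e := H 0 n p s
    simp only [zero_add, sub_zero, add_zero, zero_sub, zero_mul] at e
    push_cast at e ⊢
    linear_combination e
  have hu : ∀ t : ℤ, A 0 0 t = 0 := by
    intro t
    have e1 := h0 1 2 (t+3)
    have e2 := h0 2 1 (t+3)
    have e3 := h0 2 0 (t+2)
    have e4 := h0 1 0 (t+1)
    rw [show t+3-1 = t+2 from by ring, show t+3+1 = t+4 from by ring, S 0 2 (t+2)] at e1
    rw [show t+3-2 = t+1 from by ring, show t+3+2 = t+5 from by ring, S 0 1 (t+1),
        S 2 1 (t+3)] at e2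
    rw [show t+2-2 = t from by ring, show t+2+2 = t+4 from by ring] at e3
    rw [show t+1-1 = t from by ring, show t+1+1 = t+2 from by ring] at e4
    push_cast at e1 e2 e3 e4
    -- e1 : (t+2) * A 1 2 (t+3) = (t+4) * A 2 0 (t+2)
    -- e2 : (t+1) * A 1 2 (t+3) = (t+5) * A 1 0 (t+1)
    -- e3 : t * A 2 0 (t+2) = (t+4) * A 0 0 t
    -- e4 : t * A 1 0 (t+1) = (t+2) * A 0 0 t
    linear_combination ((t:ℂ)*((t:ℂ)+1)/4) * e1 - ((t:ℂ)*((t:ℂ)+2)/4) * e2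
      + (((t:ℂ)+1)*((t:ℂ)+4)/4) * e3 - (((t:ℂ)+2)*((t:ℂ)+5)/4) * e4
  have hv1 : ∀ n s : ℤ, s ≠ n → A n 0 s = 0 := by
    intro n s hne
    have e := h0 n 0 s
    rw [hu (s-n), mul_zero] at e
    have hc : ((s - n : ℤ) : ℂ) ≠ 0 := Int.cast_ne_zero.mpr (by omega)
    exact (mul_eq_zero.mp e).resolve_left hc
  have hstar : ∀ n p : ℤ, ((p : ℤ) : ℂ) * A n p (n+p) = ((2*n + p : ℤ) : ℂ) * A p 0 p := by
    intro n p
    have e := h0 n p (n+p)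
    rw [show n+p-n = p from by ring, S 0 p p] at e
    push_cast at e ⊢
    linear_combination e
  have hg : ∀ n p : ℤ, (n:ℂ)*(2*(n:ℂ)+p) * A p 0 p = (p:ℂ)*(2*(p:ℂ)+n) * A n 0 n := by
    intro n p
    have e1 := hstar n p
    have e2 := hstar p n
    rw [show p+n = n+p from by ring, S p n (n+p)] at e2
    push_cast at e1 e2 ⊢
    linear_combination (p:ℂ) * e2 - (n:ℂ) * e1
  have hg1 : A 1 0 1 = 0 := by
    have g12 := hg 1 2
    have g13 := hg 1 3
    have g23 := hg 2 3
    push_cast at g12 g13 g23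
    linear_combination (-5:ℂ)*g12 + ((7:ℂ)/3)*g13 - ((5:ℂ)/6)*g23
  have hg2 : A 2 0 2 = 0 := by
    have g12 := hg 1 2
    push_cast at g12
    linear_combination g12/4 + ((5:ℂ)/2)*hg1
  have hv : ∀ n : ℤ, A n 0 n = 0 := by
    intro n
    have g1 := hg n 1
    have g2 := hg n 2
    rw [hg1] at g1
    rw [hg2] at g2
    push_cast at g1 g2
    linear_combination g1/2 - g2/4
  have hAn0 : ∀ n s : ℤ, A n 0 s = 0 := by
    intro n s
    by_cases hs : s = n
    · subst hs; exact hv s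
    · exact hv1 n s hs
  have hA0 : ∀ p s : ℤ, A 0 p s = 0 := fun p s => (S 0 p s).trans (hAn0 p s)
  have hoff : ∀ n p s : ℤ, s ≠ n → A n p s = 0 := by
    intro n p s hne
    have e := h0 n p s
    rw [hA0 p (s-n), mul_zero] at e
    have hc : ((s - n : ℤ) : ℂ) ≠ 0 := Int.cast_ne_zero.mpr (by omega)
    exact (mul_eq_zero.mp e).resolve_left hc
  have hdiag : ∀ n : ℤ, A n n n = 0 := by
    intro n
    set m : ℤ := (n.natAbs : ℤ) + 1 with hmdef
    have hm0 : m ≠ 0 := by omega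
    have hmn : m ≠ n := by omega
    have e := H m n n (m+n)
    rw [show m+n-m = n from by ring, show m+n-n = m from by ring] at e
    rw [S (m+n) n (m+n), hoff n (m+n) (m+n) (by omega)] at e
    rw [S m n m, hoff n m m (by omega)] at e
    -- e : (m-n) * 0 = -(m+n+m) * A n n n + (m+n+n) * 0
    have e2 : ((2*m + n : ℤ) : ℂ) * A n n n = 0 := by
      push_cast at e ⊢
      linear_combination e
    have hc : ((2*m + n : ℤ) : ℂ) ≠ 0 := Int.cast_ne_zero.mpr (by omega)
    exact (mul_eq_zero.mp e2).resolve_left hc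
  intro n p s
  by_cases h1 : s = n
  · by_cases h2 : p = n
    · rw [h1, h2]; exact hdiag n
    · rw [h1, S]; exact hoff p n n (fun hh => h2 hh.symm)
  · exact hoff n p s h1



/-- Every symmetric biderivation of `W(0,2)` is identically zero. -/
theorem symmetric_biderivation_W02_zero {W : Type*} [LieRing W] [LieAlgebra ℂ W]
    (L I : ℤ → W) (hW : IsWab 0 2 W L I) (f : W →ₗ[ℂ] W →ₗ[ℂ] W)
    (hf : IsBiderivation (fun x y => f x y)) (hsymm : ∀ x y : W, f x y = f y x) :
    ∀ x y : W, f x y = 0 := by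
  obtain ⟨B, hBL, hBI⟩ := hW.basis
  have hLL := hW.bracket_LL
  have hLI := hW.bracket_LI
  have hII := hW.bracket_II
  -- repr of brackets with basis elements
  have kL : ∀ (m s : ℤ) (v : W), B.repr ⁅L m, v⁆ (Sum.inl s)
      = ((2*m - s : ℤ) : ℂ) * B.repr v (Sum.inl (s - m)) := by
    intro m s v
    have hmaps : (Finsupp.lapply (Sum.inl s) : (ℤ ⊕ ℤ →₀ ℂ) →ₗ[ℂ] ℂ).comp
          ((B.repr : W →ₗ[ℂ] (ℤ ⊕ ℤ →₀ ℂ)).comp ((LieAlgebra.ad ℂ W) (L m)))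
        = ((2*m - s : ℤ) : ℂ) • (Finsupp.lapply (Sum.inl (s - m)) : (ℤ ⊕ ℤ →₀ ℂ) →ₗ[ℂ] ℂ).comp
            (B.repr : W →ₗ[ℂ] (ℤ ⊕ ℤ →₀ ℂ)) := by
      refine B.ext fun i => ?_
      rcases i with k | k
      · simp only [LinearMap.comp_apply, LinearMap.smul_apply, LieAlgebra.ad_apply,
          Finsupp.lapply_apply, LinearEquiv.coe_coe, smul_eq_mul, hBL]
        rw [hLL m k, ← hBL (m+k), ← hBL k, map_smul, B.repr_self, B.repr_self]
        simp only [Finsupp.smul_apply, Finsupp.single_apply, Sum.inl.injEq, smul_eq_mul]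
        by_cases hk : k = s - m
        · rw [if_pos hk, if_pos (show m + k = s by omega), mul_one, mul_one,
              show m - k = 2*m - s by omega]
        · rw [if_neg hk, if_neg (show ¬ m + k = s by omega), mul_zero, mul_zero]
      · simp only [LinearMap.comp_apply, LinearMap.smul_apply, LieAlgebra.ad_apply,
          Finsupp.lapply_apply, LinearEquiv.coe_coe, smul_eq_mul, hBI]
        rw [hLI m k, ← hBI (m+k), ← hBI k, map_smul, B.repr_self, B.repr_self]
        simp [Finsupp.single_apply]
    have := LinearMap.congr_fun hmaps v
    simp only [LinearMap.comp_apply, LinearMap.smul_apply, LieAlgebra.ad_apply,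
      Finsupp.lapply_apply, LinearEquiv.coe_coe, smul_eq_mul, LinearMap.zero_apply] at this
    exact this.trans (by ring)
  have kLi : ∀ (m s : ℤ) (v : W), B.repr ⁅L m, v⁆ (Sum.inr s)
      = -((s + m : ℤ) : ℂ) * B.repr v (Sum.inr (s - m)) := by
    intro m s v
    have hmaps : (Finsupp.lapply (Sum.inr s) : (ℤ ⊕ ℤ →₀ ℂ) →ₗ[ℂ] ℂ).comp
          ((B.repr : W →ₗ[ℂ] (ℤ ⊕ ℤ →₀ ℂ)).comp ((LieAlgebra.ad ℂ W) (L m)))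
        = (-((s + m : ℤ) : ℂ)) • (Finsupp.lapply (Sum.inr (s - m)) : (ℤ ⊕ ℤ →₀ ℂ) →ₗ[ℂ] ℂ).comp
            (B.repr : W →ₗ[ℂ] (ℤ ⊕ ℤ →₀ ℂ)) := by
      refine B.ext fun i => ?_
      rcases i with k | k
      · simp only [LinearMap.comp_apply, LinearMap.smul_apply, LieAlgebra.ad_apply,
          Finsupp.lapply_apply, LinearEquiv.coe_coe, smul_eq_mul, hBL]
        rw [hLL m k, ← hBL (m+k), ← hBL k, map_smul, B.repr_self, B.repr_self]
        simp [Finsupp.single_apply]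
      · simp only [LinearMap.comp_apply, LinearMap.smul_apply, LieAlgebra.ad_apply,
          Finsupp.lapply_apply, LinearEquiv.coe_coe, smul_eq_mul, hBI]
        rw [hLI m k, ← hBI (m+k), ← hBI k, map_smul, B.repr_self, B.repr_self]
        simp only [Finsupp.smul_apply, Finsupp.single_apply, Sum.inr.injEq, smul_eq_mul]
        by_cases hk : k = s - m
        · rw [if_pos hk, if_pos (show m + k = s by omega), mul_one, mul_one, hk]
          push_cast; ring
        · rw [if_neg hk, if_neg (show ¬ m + k = s by omega), mul_zero, mul_zero]
    have := LinearMap.congr_fun hmaps v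
    simp only [LinearMap.comp_apply, LinearMap.smul_apply, LieAlgebra.ad_apply,
      Finsupp.lapply_apply, LinearEquiv.coe_coe, smul_eq_mul, LinearMap.zero_apply] at this
    exact this.trans (by ring)
  have kI : ∀ (m s : ℤ) (v : W), B.repr ⁅I m, v⁆ (Sum.inl s) = 0 := by
    intro m s v
    have hmaps : (Finsupp.lapply (Sum.inl s) : (ℤ ⊕ ℤ →₀ ℂ) →ₗ[ℂ] ℂ).comp
          ((B.repr : W →ₗ[ℂ] (ℤ ⊕ ℤ →₀ ℂ)).comp ((LieAlgebra.ad ℂ W) (I m)))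
        = 0 := by
      refine B.ext fun i => ?_
      rcases i with k | k
      · simp only [LinearMap.comp_apply, LieAlgebra.ad_apply,
          Finsupp.lapply_apply, LinearEquiv.coe_coe, hBL, LinearMap.zero_apply]
        rw [← lie_skew (I m) (L k), hLI k m, ← hBI (k+m), map_neg, map_smul, B.repr_self]
        simp [Finsupp.single_apply]
      · simp only [LinearMap.comp_apply, LieAlgebra.ad_apply,
          Finsupp.lapply_apply, LinearEquiv.coe_coe, hBI, LinearMap.zero_apply]
        rw [hII m k]
        simp
    have := LinearMap.congr_fun hmaps v
    simp only [LinearMap.comp_apply, LinearMap.smul_apply, LieAlgebra.ad_apply,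
      Finsupp.lapply_apply, LinearEquiv.coe_coe, smul_eq_mul, LinearMap.zero_apply] at this
    exact this.trans (by ring)
  have kIi : ∀ (m s : ℤ) (v : W), B.repr ⁅I m, v⁆ (Sum.inr s)
      = ((2*s - m : ℤ) : ℂ) * B.repr v (Sum.inl (s - m)) := by
    intro m s v
    have hmaps : (Finsupp.lapply (Sum.inr s) : (ℤ ⊕ ℤ →₀ ℂ) →ₗ[ℂ] ℂ).comp
          ((B.repr : W →ₗ[ℂ] (ℤ ⊕ ℤ →₀ ℂ)).comp ((LieAlgebra.ad ℂ W) (I m)))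
        = ((2*s - m : ℤ) : ℂ) • (Finsupp.lapply (Sum.inl (s - m)) : (ℤ ⊕ ℤ →₀ ℂ) →ₗ[ℂ] ℂ).comp
            (B.repr : W →ₗ[ℂ] (ℤ ⊕ ℤ →₀ ℂ)) := by
      refine B.ext fun i => ?_
      rcases i with k | k
      · simp only [LinearMap.comp_apply, LinearMap.smul_apply, LieAlgebra.ad_apply,
          Finsupp.lapply_apply, LinearEquiv.coe_coe, smul_eq_mul, hBL]
        rw [← lie_skew (I m) (L k), hLI k m, ← hBI (k+m), ← hBL k, map_neg, map_smul,
          B.repr_self, B.repr_self]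
        simp only [Finsupp.neg_apply, Finsupp.smul_apply, Finsupp.single_apply,
          Sum.inr.injEq, Sum.inl.injEq, smul_eq_mul]
        by_cases hk : k = s - m
        · rw [if_pos hk, if_pos (show k + m = s by omega), mul_one, mul_one, hk]
          push_cast; ring
        · rw [if_neg hk, if_neg (show ¬ k + m = s by omega), mul_zero, mul_zero, neg_zero]
      · simp only [LinearMap.comp_apply, LinearMap.smul_apply, LieAlgebra.ad_apply,
          Finsupp.lapply_apply, LinearEquiv.coe_coe, smul_eq_mul, hBI]
        rw [hII m k, ← hBI k, map_zero, B.repr_self]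
        simp [Finsupp.single_apply]
    have := LinearMap.congr_fun hmaps v
    simp only [LinearMap.comp_apply, LinearMap.smul_apply, LieAlgebra.ad_apply,
      Finsupp.lapply_apply, LinearEquiv.coe_coe, smul_eq_mul, LinearMap.zero_apply] at this
    exact this.trans (by ring)
  -- component equations of the biderivation identity
  have comp1L : ∀ m n p s : ℤ, ((m - n : ℤ) : ℂ) * B.repr (f (L (m+n)) (L p)) (Sum.inl s)
      = ((2*m - s : ℤ) : ℂ) * B.repr (f (L n) (L p)) (Sum.inl (s-m))
        + ((s - 2*n : ℤ) : ℂ) * B.repr (f (L m) (L p)) (Sum.inl (s-n)) := by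
    intro m n p s
    have h := hf.1 (L m) (L n) (L p)
    simp only [] at h
    rw [hLL m n,
      show ⁅f (L m) (L p), L n⁆ = -⁅L n, f (L m) (L p)⁆ from (lie_skew _ _).symm] at h
    have h2 := congrArg (fun w => B.repr w (Sum.inl s)) h
    simp only [map_smul, map_add, map_neg, LinearMap.smul_apply, Finsupp.smul_apply,
      Finsupp.add_apply, Finsupp.neg_apply, smul_eq_mul] at h2
    rw [kL m s, kL n s] at h2
    push_cast at h2 ⊢
    linear_combination h2
  have comp1I : ∀ m n p s : ℤ, ((m - n : ℤ) : ℂ) * B.repr (f (L (m+n)) (L p)) (Sum.inr s)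
      = -((s + m : ℤ) : ℂ) * B.repr (f (L n) (L p)) (Sum.inr (s-m))
        + ((s + n : ℤ) : ℂ) * B.repr (f (L m) (L p)) (Sum.inr (s-n)) := by
    intro m n p s
    have h := hf.1 (L m) (L n) (L p)
    simp only [] at h
    rw [hLL m n,
      show ⁅f (L m) (L p), L n⁆ = -⁅L n, f (L m) (L p)⁆ from (lie_skew _ _).symm] at h
    have h2 := congrArg (fun w => B.repr w (Sum.inr s)) h
    simp only [map_smul, map_add, map_neg, LinearMap.smul_apply, Finsupp.smul_apply,
      Finsupp.add_apply, Finsupp.neg_apply, smul_eq_mul] at h2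
    rw [kLi m s, kLi n s] at h2
    push_cast at h2 ⊢
    linear_combination h2
  have comp2I : ∀ m n p s : ℤ, ((m - n : ℤ) : ℂ) * B.repr (f (L (m+n)) (I p)) (Sum.inr s)
      = -((s + m : ℤ) : ℂ) * B.repr (f (L n) (I p)) (Sum.inr (s-m))
        + ((s + n : ℤ) : ℂ) * B.repr (f (L m) (I p)) (Sum.inr (s-n)) := by
    intro m n p s
    have h := hf.1 (L m) (L n) (I p)
    simp only [] at h
    rw [hLL m n,
      show ⁅f (L m) (I p), L n⁆ = -⁅L n, f (L m) (I p)⁆ from (lie_skew _ _).symm] at h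
    have h2 := congrArg (fun w => B.repr w (Sum.inr s)) h
    simp only [map_smul, map_add, map_neg, LinearMap.smul_apply, Finsupp.smul_apply,
      Finsupp.add_apply, Finsupp.neg_apply, smul_eq_mul] at h2
    rw [kLi m s, kLi n s] at h2
    push_cast at h2 ⊢
    linear_combination h2
  have comp3L : ∀ m n p s : ℤ, ((n + 2*m : ℤ) : ℂ) * B.repr (f (L p) (I (m+n))) (Sum.inl s)
      = ((s - 2*m : ℤ) : ℂ) * B.repr (f (L p) (I n)) (Sum.inl (s-m)) := by
    intro m n p s
    have h := hf.1 (L m) (I n) (L p)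
    simp only [] at h
    rw [hLI m n,
      show ⁅f (L m) (L p), I n⁆ = -⁅I n, f (L m) (L p)⁆ from (lie_skew _ _).symm] at h
    have h2 := congrArg (fun w => B.repr w (Sum.inl s)) h
    simp only [map_smul, map_add, map_neg, LinearMap.smul_apply, Finsupp.smul_apply,
      Finsupp.add_apply, Finsupp.neg_apply, smul_eq_mul] at h2
    rw [hsymm (I (m+n)) (L p), hsymm (I n) (L p), kL m s, kI n s] at h2
    push_cast at h2 ⊢
    linear_combination -h2
  have comp3I : ∀ m n p s : ℤ, ((n + 2*m : ℤ) : ℂ) * B.repr (f (L p) (I (m+n))) (Sum.inr s)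
      = ((s + m : ℤ) : ℂ) * B.repr (f (L p) (I n)) (Sum.inr (s-m))
        + ((2*s - n : ℤ) : ℂ) * B.repr (f (L m) (L p)) (Sum.inl (s-n)) := by
    intro m n p s
    have h := hf.1 (L m) (I n) (L p)
    simp only [] at h
    rw [hLI m n,
      show ⁅f (L m) (L p), I n⁆ = -⁅I n, f (L m) (L p)⁆ from (lie_skew _ _).symm] at h
    have h2 := congrArg (fun w => B.repr w (Sum.inr s)) h
    simp only [map_smul, map_add, map_neg, LinearMap.smul_apply, Finsupp.smul_apply,
      Finsupp.add_apply, Finsupp.neg_apply, smul_eq_mul] at h2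
    rw [hsymm (I (m+n)) (L p), hsymm (I n) (L p), kLi m s, kIi n s] at h2
    push_cast at h2 ⊢
    linear_combination -h2
  have comp4L : ∀ m n p s : ℤ, ((n + 2*m : ℤ) : ℂ) * B.repr (f (I (m+n)) (I p)) (Sum.inl s)
      = ((s - 2*m : ℤ) : ℂ) * B.repr (f (I n) (I p)) (Sum.inl (s-m)) := by
    intro m n p s
    have h := hf.1 (L m) (I n) (I p)
    simp only [] at h
    rw [hLI m n,
      show ⁅f (L m) (I p), I n⁆ = -⁅I n, f (L m) (I p)⁆ from (lie_skew _ _).symm] at h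
    have h2 := congrArg (fun w => B.repr w (Sum.inl s)) h
    simp only [map_smul, map_add, map_neg, LinearMap.smul_apply, Finsupp.smul_apply,
      Finsupp.add_apply, Finsupp.neg_apply, smul_eq_mul] at h2
    rw [kL m s, kI n s] at h2
    push_cast at h2 ⊢
    linear_combination -h2
  have comp4I : ∀ m n p s : ℤ, ((n + 2*m : ℤ) : ℂ) * B.repr (f (I (m+n)) (I p)) (Sum.inr s)
      = ((s + m : ℤ) : ℂ) * B.repr (f (I n) (I p)) (Sum.inr (s-m))
        + ((2*s - n : ℤ) : ℂ) * B.repr (f (L m) (I p)) (Sum.inl (s-n)) := by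
    intro m n p s
    have h := hf.1 (L m) (I n) (I p)
    simp only [] at h
    rw [hLI m n,
      show ⁅f (L m) (I p), I n⁆ = -⁅I n, f (L m) (I p)⁆ from (lie_skew _ _).symm] at h
    have h2 := congrArg (fun w => B.repr w (Sum.inr s)) h
    simp only [map_smul, map_add, map_neg, LinearMap.smul_apply, Finsupp.smul_apply,
      Finsupp.add_apply, Finsupp.neg_apply, smul_eq_mul] at h2
    rw [kLi m s, kIi n s] at h2
    push_cast at h2 ⊢
    linear_combination -h2
  -- Step 1: L-part of f(L,I) vanishes
  have hcL : ∀ p n k : ℤ, B.repr (f (L p) (I n)) (Sum.inl k) = 0 := fun p =>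
    K1 (fun n k => B.repr (f (L p) (I n)) (Sum.inl k)) (fun m n s => comp3L m n p s)
  -- Step 2: L-part of f(L,L) vanishes
  have ha : ∀ m n k : ℤ, B.repr (f (L m) (L n)) (Sum.inl k) = 0 :=
    KA (fun m n k => B.repr (f (L m) (L n)) (Sum.inl k))
      (fun n p k => by rw [hsymm (L n) (L p)]) comp1L
  -- Step 3: L-part of f(I,I) vanishes
  have heL : ∀ n p k : ℤ, B.repr (f (I n) (I p)) (Sum.inl k) = 0 := by
    intro n p k
    exact K1 (fun q s => B.repr (f (I q) (I p)) (Sum.inl s)) (fun m n s => comp4L m n p s) n k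
  -- Step 4: I-part of f(L,I) vanishes
  have hc23 := fun p => K2 (fun n s => B.repr (f (L p) (I n)) (Sum.inr s))
    (fun m n s => by
      have h := comp3I m n p s
      rw [ha m p (s-n), mul_zero, add_zero] at h
      exact h)
  have hc00 : ∀ n : ℤ, B.repr (f (L n) (I 0)) (Sum.inr 0) = 0 := by
    intro n
    set m : ℤ := (n.natAbs : ℤ) + 1 with hmdef
    have hm0 : m ≠ 0 := by omega
    have hmn : m ≠ n := by omega
    have e := comp2I m n 0 m
    rw [show m - m = (0:ℤ) from by ring] at e
    rw [(hc23 (m+n)).1 0 m hm0] at e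
    rw [(hc23 m).1 0 (m-n) (by omega)] at e
    have e2 : ((m + m : ℤ) : ℂ) * B.repr (f (L n) (I 0)) (Sum.inr 0) = 0 := by
      push_cast at e ⊢
      linear_combination e
    have hcne : ((m + m : ℤ) : ℂ) ≠ 0 := Int.cast_ne_zero.mpr (by omega)
    exact (mul_eq_zero.mp e2).resolve_left hcne
  have hc : ∀ p n s : ℤ, B.repr (f (L p) (I n)) (Sum.inr s) = 0 := by
    intro p n s
    by_cases hs : s = n
    · rw [hs]
      have := (hc23 p).2 n
      rw [this]
      exact hc00 p
    · exact (hc23 p).1 n s hs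
  -- Step 5: I-part of f(I,I) vanishes
  have he23 := fun p => K2 (fun q s => B.repr (f (I q) (I p)) (Sum.inr s))
    (fun m n s => by
      have h := comp4I m n p s
      rw [hcL m p (s-n), mul_zero, add_zero] at h
      exact h)
  have he : ∀ q p s : ℤ, B.repr (f (I q) (I p)) (Sum.inr s) = 0 := by
    have hk : ∀ p : ℤ, B.repr (f (I 0) (I p)) (Sum.inr 0) = 0 := by
      intro p
      set q : ℤ := (p.natAbs : ℤ) + 1 with hqdef
      have hq0 : q ≠ 0 := by omega
      have hqp : q ≠ p := by omega
      have h1 := (he23 p).2 q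
      have h2 : B.repr (f (I q) (I p)) (Sum.inr q) = 0 := by
        rw [hsymm (I q) (I p)]
        exact (he23 q).1 p q hqp
      rw [← h1]
      exact h2
    intro q p s
    by_cases hs : s = q
    · rw [hs, (he23 p).2 q]
      exact hk p
    · exact (he23 p).1 q s hs
  -- Step 6: I-part of f(L,L) vanishes
  have hb : ∀ m n k : ℤ, B.repr (f (L m) (L n)) (Sum.inr k) = 0 :=
    KB (fun m n k => B.repr (f (L m) (L n)) (Sum.inr k))
      (fun n p k => by rw [hsymm (L n) (L p)]) comp1I
  -- assembly
  have hbasis : ∀ i j : ℤ ⊕ ℤ, f (B i) (B j) = 0 := by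
    intro i j
    have h0 : ∀ idx, B.repr (f (B i) (B j)) idx = 0 := by
      intro idx
      rcases i with m | m <;> rcases j with n | n <;>
        simp only [hBL, hBI] <;> rcases idx with k | k
      · exact ha m n k
      · exact hb m n k
      · exact hcL m n k
      · exact hc m n k
      · rw [hsymm (I m) (L n)]; exact hcL n m k
      · rw [hsymm (I m) (L n)]; exact hc n m k
      · exact heL m n k
      · exact he m n k
    have hz : B.repr (f (B i) (B j)) = 0 := Finsupp.ext h0
    exact (LinearEquiv.map_eq_zero_iff B.repr).mp hz
  intro x y
  have hf0 : f = 0 := by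
    refine B.ext fun i => ?_
    rw [LinearMap.zero_apply]
    refine B.ext fun j => ?_
    rw [LinearMap.zero_apply]
    exact hbasis i j
  rw [hf0, LinearMap.zero_apply, LinearMap.zero_apply]
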